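/- Let θ₀ satisfy 0 < θ₀ < π, let S = {ξ ∈ ℂ : ξ ≠ 0 and |arg ξ| < θ₀}, let q : ℂ → ℂ be holomorphic on S with |q(ξ)| ≤ k(1+|ξ|)^(−γ) on S for some constants γ > 1, k > 0. Let z ∈ ℂ with Im z > 0 and define functions uₙ, vₙ on S by u₀ ≡ 1, v₀ ≡ 0 and, for n ≥ 1, uₙ(ξ) = (i/(2z)) ∫₀^∞ q(ξ+s)·(uₙ₋₁+vₙ₋₁)(ξ+s) ds and vₙ(ξ) = −(i/(2z)) ∫₀^∞ q(ξ+s)·e^{2isz}·(uₙ₋₁+vₙ₋₁)(ξ+s) ds. Then for every n ≥ 0 the functions uₙ and vₙ are holomorphic functions of ξ on S. -/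

import Mathlib

open Complex MeasureTheory Real Set Metric

lemma JA.ratio_mono {a b : ℝ} (s : ℝ) (hs : 0 ≤ s) (hb : b ≠ 0) :
    a / Real.sqrt (a ^ 2 + b ^ 2) ≤ (a + s) / Real.sqrt ((a + s) ^ 2 + b ^ 2) := by
  have hb2 : 0 < b ^ 2 := by positivity
  have h1 : 0 < Real.sqrt (a ^ 2 + b ^ 2) := Real.sqrt_pos.2 (by positivity)
  have h2 : 0 < Real.sqrt ((a + s) ^ 2 + b ^ 2) := Real.sqrt_pos.2 (by positivity)
  rw [div_le_div_iff₀ h1 h2]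
  rcases le_or_gt 0 a with ha | ha
  · have has : 0 ≤ a + s := by linarith
    calc a * Real.sqrt ((a + s) ^ 2 + b ^ 2)
        = Real.sqrt (a ^ 2 * ((a + s) ^ 2 + b ^ 2)) := by
          rw [Real.sqrt_mul (sq_nonneg a), Real.sqrt_sq ha]
      _ ≤ Real.sqrt ((a + s) ^ 2 * (a ^ 2 + b ^ 2)) := by
          apply Real.sqrt_le_sqrt; nlinarith [mul_nonneg (mul_nonneg hs hs) hb2.le, mul_nonneg (mul_nonneg hs ha) hb2.le]
      _ = (a + s) * Real.sqrt (a ^ 2 + b ^ 2) := by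
          rw [Real.sqrt_mul (sq_nonneg _), Real.sqrt_sq has]
  · rcases le_or_gt 0 (a + s) with has | has
    · have hL : a * Real.sqrt ((a + s) ^ 2 + b ^ 2) ≤ 0 :=
        mul_nonpos_of_nonpos_of_nonneg ha.le h2.le
      have hR : 0 ≤ (a + s) * Real.sqrt (a ^ 2 + b ^ 2) := mul_nonneg has h1.le
      linarith
    · have key : (-(a + s)) * Real.sqrt (a ^ 2 + b ^ 2)
          ≤ (-a) * Real.sqrt ((a + s) ^ 2 + b ^ 2) := by
        calc (-(a + s)) * Real.sqrt (a ^ 2 + b ^ 2)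
            = Real.sqrt ((a + s) ^ 2 * (a ^ 2 + b ^ 2)) := by
              rw [Real.sqrt_mul (sq_nonneg _), Real.sqrt_sq_eq_abs, abs_of_neg has]
          _ ≤ Real.sqrt (a ^ 2 * ((a + s) ^ 2 + b ^ 2)) := by
              apply Real.sqrt_le_sqrt; nlinarith [mul_nonneg (mul_nonneg hs (by linarith : (0:ℝ) ≤ -(2*a+s))) hb2.le]
          _ = (-a) * Real.sqrt ((a + s) ^ 2 + b ^ 2) := by
              rw [Real.sqrt_mul (sq_nonneg a), Real.sqrt_sq_eq_abs, abs_of_neg ha]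
      linarith

lemma JA.abs_arg_add_le {ξ : ℂ} (hξ : ξ ≠ 0) (hπ : |ξ.arg| < π) (s : ℝ) (hs : 0 ≤ s) :
    ξ + (s : ℂ) ≠ 0 ∧ |(ξ + (s : ℂ)).arg| ≤ |ξ.arg| := by
  rcases eq_or_ne ξ.im 0 with him | him
  · have hre : ξ.re ≠ 0 := fun h => hξ (Complex.ext h him)
    have hre' : 0 < ξ.re := by
      rcases hre.lt_or_gt with h | h
      · exfalso
        have : ξ.arg = π := Complex.arg_eq_pi_iff.2 ⟨h, him⟩
        rw [this, abs_of_pos Real.pi_pos] at hπ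
        exact lt_irrefl _ hπ
      · exact h
    have h1 : (ξ + (s : ℂ)).re = ξ.re + s := by simp
    have h2 : (ξ + (s : ℂ)).im = 0 := by simp [him]
    have hne : ξ + (s : ℂ) ≠ 0 := by
      intro h
      have := congrArg Complex.re h
      rw [h1] at this
      simp at this
      linarith
    refine ⟨hne, ?_⟩
    rw [Complex.arg_eq_zero_iff.2 ⟨by rw [h1]; linarith, h2⟩]
    simp [abs_nonneg]
  · have him' : (ξ + (s : ℂ)).im = ξ.im := by simp
    have hne : ξ + (s : ℂ) ≠ 0 := by
      intro h
      apply him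
      rw [← him', h]
      simp
    refine ⟨hne, ?_⟩
    have habs : ∀ w : ℂ, w.im ≠ 0 → |w.arg| = Real.arccos (w.re / ‖w‖) := by
      intro w hw
      rcases hw.lt_or_gt with h | h
      · rw [Complex.arg_of_im_neg h, abs_neg, _root_.abs_of_nonneg (Real.arccos_nonneg _)]
      · rw [Complex.arg_of_im_pos h, _root_.abs_of_nonneg (Real.arccos_nonneg _)]
    rw [habs _ him, habs _ (by rw [him']; exact him)]
    have harc : ∀ x y : ℝ, x ≤ y → Real.arccos y ≤ Real.arccos x := by
      intro x y h
      simp only [Real.arccos_eq_pi_div_two_sub_arcsin]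
      have := Real.monotone_arcsin h
      linarith
    apply harc
    have eabs : ∀ w : ℂ, ‖w‖ = Real.sqrt (w.re ^ 2 + w.im ^ 2) := by
      intro w
      rw [Complex.norm_def, Complex.normSq_apply]
      congr 1
      ring
    rw [eabs, eabs]
    have h1 : (ξ + (s : ℂ)).re = ξ.re + s := by simp
    rw [h1, him']
    exact JA.ratio_mono s hs him

lemma JA.sector_isOpen {θ₀ : ℝ} (hθ : θ₀ < π) :
    IsOpen {ξ : ℂ | ξ ≠ 0 ∧ |ξ.arg| < θ₀} := by
  rw [isOpen_iff_eventually]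
  rintro ξ ⟨hξ0, hξa⟩
  have hslit : ξ ∈ Complex.slitPlane := by
    rw [Complex.mem_slitPlane_iff]
    by_contra h
    push_neg at h
    obtain ⟨h1, h2⟩ := h
    have hre : ξ.re < 0 := lt_of_le_of_ne h1 (fun h => hξ0 (Complex.ext h h2))
    have : ξ.arg = π := Complex.arg_eq_pi_iff.2 ⟨hre, h2⟩
    rw [this, abs_of_pos Real.pi_pos] at hξa
    linarith
  have h1 : ∀ᶠ x in nhds ξ, x ≠ (0 : ℂ) :=
    (isOpen_compl_singleton.mem_nhds (by simpa using hξ0))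
  have h2 : ∀ᶠ x in nhds ξ, |Complex.arg x| < θ₀ :=
    ((Complex.continuousAt_arg hslit).abs).eventually_lt_const hξa
  filter_upwards [h1, h2] with x hx1 hx2
  exact ⟨hx1, hx2⟩

lemma JA.diffAt_integral_translate
    {S : Set ℂ} (hSo : IsOpen S) {f : ℂ → ℂ} (hf : DifferentiableOn ℂ f S)
    {ξ : ℂ} {ε : ℝ} (hε : 0 < ε)
    (htube : ∀ s : ℝ, 0 ≤ s → closedBall (ξ + (s : ℂ)) (2 * ε) ⊆ S)
    {B : ℝ → ℝ} (hB : IntegrableOn B (Ioi 0))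
    (hfB : ∀ s : ℝ, 0 < s → ∀ w ∈ closedBall (ξ + (s : ℂ)) (2 * ε), ‖f w‖ ≤ B s) :
    DifferentiableAt ℂ (fun ζ : ℂ => ∫ s in Ioi (0 : ℝ), f (ζ + (s : ℂ))) ξ := by
  have hfc : ContinuousOn f S := hf.continuousOn
  have hmemS : ∀ x ∈ ball ξ ε, ∀ s : ℝ, 0 ≤ s → x + (s : ℂ) ∈ S := by
    intro x hx s hs
    apply htube s hs
    rw [mem_closedBall]
    have h1 : dist (x + (s : ℂ)) (ξ + (s : ℂ)) = dist x ξ := dist_add_right x ξ _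
    rw [h1]
    have := mem_ball.1 hx
    linarith
  have hmeas : ∀ x ∈ ball ξ ε,
      AEStronglyMeasurable (fun s : ℝ => f (x + (s : ℂ))) (volume.restrict (Ioi 0)) := by
    intro x hx
    apply ContinuousOn.aestronglyMeasurable _ measurableSet_Ioi
    have inner : ContinuousOn (fun s : ℝ => x + (s : ℂ)) (Ioi 0) :=
      (continuous_const.add Complex.continuous_ofReal).continuousOn
    exact hfc.comp inner (fun t ht => hmemS x hx t (le_of_lt ht))
  have hderivc : ContinuousOn (deriv f) S := ((hf.analyticOnNhd hSo).deriv).continuousOn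
  have hcenter : ∀ s : ℝ, 0 < s → ξ + (s : ℂ) ∈ closedBall (ξ + (s : ℂ)) (2 * ε) :=
    fun s _ => mem_closedBall_self (by positivity)
  have key := hasDerivAt_integral_of_dominated_loc_of_deriv_le (μ := volume.restrict (Ioi (0:ℝ)))
    (F := fun (x : ℂ) (s : ℝ) => f (x + (s : ℂ)))
    (F' := fun (x : ℂ) (s : ℝ) => deriv f (x + (s : ℂ)))
    (x₀ := ξ) (bound := fun s => B s / ε) (ball_mem_nhds ξ hε)
    (by filter_upwards [ball_mem_nhds ξ hε] with x hx using hmeas x hx)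
    (by
      apply Integrable.mono' hB (hmeas ξ (mem_ball_self hε))
      rw [ae_restrict_iff' measurableSet_Ioi]
      filter_upwards with s hs
      exact hfB s hs _ (hcenter s hs))
    (by
      apply ContinuousOn.aestronglyMeasurable _ measurableSet_Ioi
      have inner : ContinuousOn (fun s : ℝ => ξ + (s : ℂ)) (Ioi 0) :=
        (continuous_const.add Complex.continuous_ofReal).continuousOn
      exact hderivc.comp inner (fun t ht => hmemS ξ (mem_ball_self hε) t (le_of_lt ht)))
    (by
      rw [ae_restrict_iff' measurableSet_Ioi]
      filter_upwards with s hs x hx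
      have hsub : closedBall (x + (s : ℂ)) ε ⊆ S := by
        intro w hw
        apply htube s (le_of_lt hs)
        rw [mem_closedBall]
        calc dist w (ξ + (s : ℂ)) ≤ dist w (x + (s : ℂ)) + dist (x + (s : ℂ)) (ξ + (s : ℂ)) :=
              dist_triangle _ _ _
          _ ≤ ε + dist x ξ := by
              rw [dist_add_right]
              exact add_le_add (mem_closedBall.1 hw) le_rfl
          _ ≤ 2 * ε := by
              have := (mem_ball.1 hx).le
              linarith
      apply Complex.norm_deriv_le_of_forall_mem_sphere_norm_le hε
        (hf.diffContOnCl_ball hsub)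
      intro w hw
      apply hfB s hs
      rw [mem_closedBall]
      calc dist w (ξ + (s : ℂ)) ≤ dist w (x + (s : ℂ)) + dist (x + (s : ℂ)) (ξ + (s : ℂ)) :=
            dist_triangle _ _ _
        _ ≤ ε + dist x ξ := by
            rw [dist_add_right]
            exact add_le_add (le_of_eq (mem_sphere.1 hw)) le_rfl
        _ ≤ 2 * ε := by
            have := (mem_ball.1 hx).le
            linarith)
    (hB.div_const ε)
    (by
      rw [ae_restrict_iff' measurableSet_Ioi]
      filter_upwards with s hs x hx
      have hdx : DifferentiableAt ℂ f (x + (s : ℂ)) :=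
        hf.differentiableAt (hSo.mem_nhds (hmemS x hx s (le_of_lt hs)))
      have h1 : HasDerivAt f (deriv f (x + (s : ℂ))) (x + (s : ℂ)) := hdx.hasDerivAt
      have h2 : HasDerivAt (fun y : ℂ => y + (s : ℂ)) 1 x := (hasDerivAt_id x).add_const _
      have h3 := HasDerivAt.comp x h1 h2
      rw [mul_one] at h3
      exact h3)
  exact key.2.differentiableAt

lemma JA.integrable_one_add_abs {γ : ℝ} (hγ : 1 < γ) :
    Integrable (fun t : ℝ => (1 + |t|) ^ (-γ)) := by
  have h := integrable_one_add_norm (E := ℝ) (μ := volume) (r := γ) (by simpa using hγ)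
  simpa [Real.norm_eq_abs] using h

lemma JA.shifted_integrable {γ : ℝ} (hγ : 1 < γ) (c : ℝ) :
    Integrable (fun s : ℝ => (1 + |c + s|) ^ (-γ)) := by
  have hmp := measurePreserving_add_left (volume : Measure ℝ) c
  exact (hmp.integrable_comp_emb (Homeomorph.addLeft c).measurableEmbedding).2
    (JA.integrable_one_add_abs hγ)

lemma JA.shift_integral_le {γ : ℝ} (hγ : 1 < γ) (c : ℝ) :
    ∫ s in Ioi (0 : ℝ), (1 + |c + s|) ^ (-γ) ≤ ∫ t : ℝ, (1 + |t|) ^ (-γ) := by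
  have h1 : ∫ s in Ioi (0 : ℝ), (1 + |c + s|) ^ (-γ) ≤ ∫ s : ℝ, (1 + |c + s|) ^ (-γ) :=
    setIntegral_le_integral (JA.shifted_integrable hγ c)
      (Filter.Eventually.of_forall fun s => by positivity)
  have h2 : ∫ s : ℝ, (1 + |c + s|) ^ (-γ) = ∫ t : ℝ, (1 + |t|) ^ (-γ) :=
    (measurePreserving_add_left (volume : Measure ℝ) c).integral_comp
      (Homeomorph.addLeft c).measurableEmbedding (fun t : ℝ => (1 + |t|) ^ (-γ))
  linarith

lemma JA.rpow_tail {γ a s x : ℝ} (hγ : 0 < γ) (ha : 0 ≤ a) (hx : 0 ≤ x) (hs : 0 ≤ s)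
    (h : s ≤ x + a) : (1 + x) ^ (-γ) ≤ (1 + a) ^ γ * (1 + s) ^ (-γ) := by
  have hx1 : (0:ℝ) < 1 + x := by linarith
  have hs1 : (0:ℝ) < 1 + s := by linarith
  have ha1 : (0:ℝ) < 1 + a := by linarith
  have key : (1 + s) ^ γ ≤ (1 + a) ^ γ * (1 + x) ^ γ := by
    rw [← Real.mul_rpow ha1.le hx1.le]
    exact Real.rpow_le_rpow hs1.le (by nlinarith) hγ.le
  have h2 : (0:ℝ) < (1 + x) ^ γ := Real.rpow_pos_of_pos hx1 _
  have h3 : (0:ℝ) < (1 + s) ^ γ := Real.rpow_pos_of_pos hs1 _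
  rw [Real.rpow_neg hx1.le, Real.rpow_neg hs1.le, ← div_eq_mul_inv, inv_eq_one_div,
    div_le_div_iff₀ h2 h3, one_mul]
  linarith [key]

/-- Lemma 2.2, regularity part: each Jost iterate is holomorphic in `ξ` on the sector `S`. -/
theorem stmt_1
    (θ₀ γ k : ℝ) (hθ₀ : 0 < θ₀) (hθ₀' : θ₀ < π)
    (S : Set ℂ) (hS : S = {ξ : ℂ | ξ ≠ 0 ∧ |ξ.arg| < θ₀})
    (q : ℂ → ℂ) (hq : DifferentiableOn ℂ q S)
    (hγ : 1 < γ) (hk : 0 < k)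
    (hqbound : ∀ ξ ∈ S, ‖q ξ‖ ≤ k * (1 + ‖ξ‖) ^ (-γ))
    (z : ℂ) (hz : 0 < z.im)
    (u v : ℕ → ℂ → ℂ)
    (hu0 : ∀ ξ ∈ S, u 0 ξ = 1) (hv0 : ∀ ξ ∈ S, v 0 ξ = 0)
    (hu : ∀ n : ℕ, ∀ ξ ∈ S, u (n + 1) ξ =
      (Complex.I / (2 * z)) *
        ∫ s in Ioi (0 : ℝ), q (ξ + s) * (u n (ξ + s) + v n (ξ + s)))
    (hv : ∀ n : ℕ, ∀ ξ ∈ S, v (n + 1) ξ =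
      -(Complex.I / (2 * z)) *
        ∫ s in Ioi (0 : ℝ), q (ξ + s) * Complex.exp (2 * Complex.I * s * z) *
          (u n (ξ + s) + v n (ξ + s))) :
    ∀ n : ℕ, DifferentiableOn ℂ (u n) S ∧ DifferentiableOn ℂ (v n) S := by
  have hSo : IsOpen S := hS ▸ JA.sector_isOpen hθ₀'
  have hadd : ∀ ξ ∈ S, ∀ s : ℝ, 0 ≤ s → ξ + (s : ℂ) ∈ S := by
    intro ξ hξ s hs
    rw [hS] at hξ ⊢
    obtain ⟨h0, ha⟩ := hξ
    obtain ⟨h0', ha'⟩ := JA.abs_arg_add_le h0 (ha.trans hθ₀') s hs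
    exact ⟨h0', lt_of_le_of_lt ha' ha⟩
  have htube : ∀ ξ ∈ S, ∃ ε : ℝ, 0 < ε ∧
      ∀ s : ℝ, 0 ≤ s → closedBall (ξ + (s : ℂ)) (2 * ε) ⊆ S := by
    intro ξ hξ
    obtain ⟨δ, hδ, hball⟩ := Metric.isOpen_iff.1 hSo ξ hξ
    refine ⟨δ / 4, by linarith, ?_⟩
    intro s hs w hw
    have hw' : w - (s : ℂ) ∈ S := by
      apply hball
      rw [Metric.mem_ball, dist_eq_norm]
      have h1 : w - (s : ℂ) - ξ = w - (ξ + (s : ℂ)) := by ring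
      rw [h1, ← dist_eq_norm]
      have := Metric.mem_closedBall.1 hw
      linarith
    have := hadd _ hw' s hs
    simpa using this
  have hγ0 : (0:ℝ) < γ := by linarith
  set I₀ : ℝ := ∫ t : ℝ, (1 + |t|) ^ (-γ) with hI₀
  have hI₀nn : 0 ≤ I₀ := integral_nonneg fun t => by positivity
  have hdecay : ∀ ξ ∈ S, ∀ s : ℝ, 0 < s →
      (1 + ‖ξ + (s : ℂ)‖) ^ (-γ) ≤ (1 + |ξ.re + s|) ^ (-γ) := by
    intro ξ hξ s hs
    apply Real.rpow_le_rpow_of_nonpos (by positivity) _ (by linarith)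
    have h1 : |ξ.re + s| ≤ ‖ξ + (s : ℂ)‖ := by
      have h2 := Complex.abs_re_le_norm (ξ + (s : ℂ))
      simpa using h2
    linarith
  have key : ∀ n : ℕ, (DifferentiableOn ℂ (u n) S ∧ DifferentiableOn ℂ (v n) S) ∧
      ∃ M : ℝ, 0 ≤ M ∧ ∀ ξ ∈ S, ‖u n ξ‖ ≤ M ∧ ‖v n ξ‖ ≤ M := by
    intro n
    induction n with
    | zero =>
        refine ⟨⟨(differentiableOn_const 1).congr hu0, (differentiableOn_const 0).congr hv0⟩,
          1, zero_le_one, ?_⟩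
        intro ξ hξ
        rw [hu0 ξ hξ, hv0 ξ hξ]
        simp
    | succ n ih =>
        obtain ⟨⟨hun, hvn⟩, M, hM0, hMb⟩ := ih
        have huvb : ∀ ζ ∈ S, ‖u n ζ + v n ζ‖ ≤ 2 * M := by
          intro ζ hζ
          obtain ⟨h1, h2⟩ := hMb ζ hζ
          calc ‖u n ζ + v n ζ‖ ≤ ‖u n ζ‖ + ‖v n ζ‖ := norm_add_le _ _
            _ ≤ 2 * M := by linarith
        have hf₁ : DifferentiableOn ℂ (fun ζ => q ζ * (u n ζ + v n ζ)) S :=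
          hq.mul (hun.add hvn)
        have hexpd : Differentiable ℂ fun ζ : ℂ => Complex.exp (2 * Complex.I * z * ζ) :=
          (differentiable_id.const_mul _).cexp
        have hf₂ : DifferentiableOn ℂ
            (fun ζ => q ζ * Complex.exp (2 * Complex.I * z * ζ) * (u n ζ + v n ζ)) S :=
          (hq.mul hexpd.differentiableOn).mul (hun.add hvn)
        have hf₁b : ∀ ζ ∈ S, ‖q ζ * (u n ζ + v n ζ)‖ ≤ 2 * k * M * (1 + ‖ζ‖) ^ (-γ) := by
          intro ζ hζ
          calc ‖q ζ * (u n ζ + v n ζ)‖ = ‖q ζ‖ * ‖u n ζ + v n ζ‖ := norm_mul _ _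
            _ ≤ (k * (1 + ‖ζ‖) ^ (-γ)) * (2 * M) :=
                mul_le_mul (hqbound ζ hζ) (huvb ζ hζ) (norm_nonneg _) (by positivity)
            _ = 2 * k * M * (1 + ‖ζ‖) ^ (-γ) := by ring
        -- differentiability of u (n+1)
        have hUdiff : DifferentiableOn ℂ (u (n + 1)) S := by
          have hG : DifferentiableOn ℂ
              (fun ξ => (Complex.I / (2 * z)) *
                ∫ s in Ioi (0 : ℝ), q (ξ + s) * (u n (ξ + s) + v n (ξ + s))) S := by
            intro ξ hξ
            obtain ⟨ε, hε, htub⟩ := htube ξ hξ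
            have hdiffI : DifferentiableAt ℂ
                (fun ζ : ℂ => ∫ s in Ioi (0 : ℝ),
                  q (ζ + s) * (u n (ζ + s) + v n (ζ + s))) ξ := by
              refine JA.diffAt_integral_translate hSo hf₁ hε htub
                (B := fun s => (2 * k * M * (1 + (‖ξ‖ + 2 * ε)) ^ γ) * (1 + |s|) ^ (-γ))
                ((JA.integrable_one_add_abs hγ).integrableOn.const_mul _) ?_
              intro s hs w hw
              have hwS : w ∈ S := htub s hs.le hw
              have hd : ‖w - (ξ + (s : ℂ))‖ ≤ 2 * ε := by
                rw [← dist_eq_norm]; exact mem_closedBall.1 hw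
              have h2 : s ≤ ‖w‖ + (‖ξ‖ + 2 * ε) := by
                have e1 : (s : ℂ) = w - ξ - (w - (ξ + (s : ℂ))) := by ring
                calc s = ‖(s : ℂ)‖ := by
                      rw [Complex.norm_real, Real.norm_eq_abs, abs_of_pos hs]
                  _ = ‖w - ξ - (w - (ξ + (s : ℂ)))‖ := by rw [← e1]
                  _ ≤ ‖w - ξ‖ + ‖w - (ξ + (s : ℂ))‖ := norm_sub_le _ _
                  _ ≤ (‖w‖ + ‖ξ‖) + 2 * ε := add_le_add (norm_sub_le _ _) hd
                  _ = ‖w‖ + (‖ξ‖ + 2 * ε) := by ring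
              have h3 : (1 + ‖w‖) ^ (-γ) ≤ (1 + (‖ξ‖ + 2 * ε)) ^ γ * (1 + s) ^ (-γ) :=
                JA.rpow_tail hγ0 (by positivity) (norm_nonneg w) hs.le h2
              show ‖q w * (u n w + v n w)‖ ≤
                (2 * k * M * (1 + (‖ξ‖ + 2 * ε)) ^ γ) * (1 + |s|) ^ (-γ)
              rw [abs_of_pos hs]
              calc ‖q w * (u n w + v n w)‖ ≤ 2 * k * M * (1 + ‖w‖) ^ (-γ) := hf₁b w hwS
                _ ≤ 2 * k * M * ((1 + (‖ξ‖ + 2 * ε)) ^ γ * (1 + s) ^ (-γ)) :=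
                    mul_le_mul_of_nonneg_left h3 (by positivity)
                _ = (2 * k * M * (1 + (‖ξ‖ + 2 * ε)) ^ γ) * (1 + s) ^ (-γ) := by ring
            exact (hdiffI.const_mul _).differentiableWithinAt
          exact hG.congr (hu n)
        -- differentiability of v (n+1)
        have hVdiff : DifferentiableOn ℂ (v (n + 1)) S := by
          have hG : DifferentiableOn ℂ
              (fun ξ => -(Complex.I / (2 * z)) * (Complex.exp (-(2 * Complex.I * z * ξ)) *
                ∫ s in Ioi (0 : ℝ),
                  q (ξ + s) * Complex.exp (2 * Complex.I * z * (ξ + s)) *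
                    (u n (ξ + s) + v n (ξ + s)))) S := by
            intro ξ hξ
            obtain ⟨ε, hε, htub⟩ := htube ξ hξ
            have hdiffI : DifferentiableAt ℂ
                (fun ζ : ℂ => ∫ s in Ioi (0 : ℝ),
                  q (ζ + s) * Complex.exp (2 * Complex.I * z * (ζ + s)) *
                    (u n (ζ + s) + v n (ζ + s))) ξ := by
              refine JA.diffAt_integral_translate hSo hf₂ hε htub
                (B := fun s => (2 * k * M *
                    Real.exp ((2 * Complex.I * z * ξ).re + 4 * ε * ‖z‖)) *
                    Real.exp (-(2 * z.im) * s))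
                ((exp_neg_integrableOn_Ioi 0 (by linarith : (0:ℝ) < 2 * z.im)).const_mul _) ?_
              intro s hs w hw
              have hwS : w ∈ S := htub s hs.le hw
              have hd : ‖w - (ξ + (s : ℂ))‖ ≤ 2 * ε := by
                rw [← dist_eq_norm]; exact mem_closedBall.1 hw
              have hqw : ‖q w‖ ≤ k := by
                have h1 := hqbound w hwS
                have h2 : (1 + ‖w‖) ^ (-γ) ≤ 1 :=
                  Real.rpow_le_one_of_one_le_of_nonpos (by linarith [norm_nonneg w]) (by linarith)
                nlinarith [norm_nonneg (q w)]
              have e2 : (2 * Complex.I * z * (s : ℂ)).re = -(2 * z.im) * s := by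
                simp [Complex.mul_re, Complex.mul_im]
              have e3 : (2 * Complex.I * z * (w - (ξ + (s : ℂ)))).re ≤ 4 * ε * ‖z‖ := by
                calc (2 * Complex.I * z * (w - (ξ + (s : ℂ)))).re
                    ≤ ‖2 * Complex.I * z * (w - (ξ + (s : ℂ)))‖ := Complex.re_le_norm _
                  _ = 2 * ‖z‖ * ‖w - (ξ + (s : ℂ))‖ := by simp [map_mul]
                  _ ≤ 2 * ‖z‖ * (2 * ε) :=
                      mul_le_mul_of_nonneg_left hd (by positivity)
                  _ = 4 * ε * ‖z‖ := by ring
              have hre : (2 * Complex.I * z * w).re ≤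
                  (2 * Complex.I * z * ξ).re + 4 * ε * ‖z‖ + -(2 * z.im) * s := by
                have e1 : 2 * Complex.I * z * w = 2 * Complex.I * z * ξ +
                    2 * Complex.I * z * (s : ℂ) + 2 * Complex.I * z * (w - (ξ + (s : ℂ))) := by
                  ring
                rw [e1, Complex.add_re, Complex.add_re, e2]
                linarith
              show ‖q w * Complex.exp (2 * Complex.I * z * w) * (u n w + v n w)‖ ≤ _
              calc ‖q w * Complex.exp (2 * Complex.I * z * w) * (u n w + v n w)‖
                  = ‖q w‖ * ‖Complex.exp (2 * Complex.I * z * w)‖ * ‖u n w + v n w‖ := by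
                    rw [norm_mul, norm_mul]
                _ ≤ k * Real.exp ((2 * Complex.I * z * ξ).re + 4 * ε * ‖z‖ +
                      -(2 * z.im) * s) * (2 * M) := by
                    have hexp : ‖Complex.exp (2 * Complex.I * z * w)‖ ≤
                        Real.exp ((2 * Complex.I * z * ξ).re + 4 * ε * ‖z‖ +
                          -(2 * z.im) * s) := by
                      rw [Complex.norm_exp]
                      exact Real.exp_le_exp.2 hre
                    apply mul_le_mul _ (huvb w hwS) (norm_nonneg _) (by positivity)
                    exact mul_le_mul hqw hexp (norm_nonneg _) hk.le
                _ = (2 * k * M * Real.exp ((2 * Complex.I * z * ξ).re +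
                      4 * ε * ‖z‖)) * Real.exp (-(2 * z.im) * s) := by
                    rw [Real.exp_add]
                    ring
            have hdiffE : DifferentiableAt ℂ
                (fun ζ : ℂ => Complex.exp (-(2 * Complex.I * z * ζ))) ξ :=
              ((differentiable_id.const_mul (2 * Complex.I * z)).neg.cexp).differentiableAt
            exact ((hdiffE.mul hdiffI).const_mul _).differentiableWithinAt
          apply hG.congr
          intro ξ hξ
          rw [hv n ξ hξ]
          congr 1
          have heq : (fun s : ℝ => q (ξ + s) * Complex.exp (2 * Complex.I * s * z) *
                (u n (ξ + s) + v n (ξ + s)))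
              = fun s : ℝ => Complex.exp (-(2 * Complex.I * z * ξ)) *
                (q (ξ + s) * Complex.exp (2 * Complex.I * z * (ξ + s)) *
                  (u n (ξ + s) + v n (ξ + s))) := by
            funext s
            have hexpeq : Complex.exp (-(2 * Complex.I * z * ξ)) *
                Complex.exp (2 * Complex.I * z * (ξ + (s : ℂ))) =
                Complex.exp (2 * Complex.I * (s : ℂ) * z) := by
              rw [← Complex.exp_add]
              congr 1
              ring
            calc q (ξ + (s : ℂ)) * Complex.exp (2 * Complex.I * s * z) *
                  (u n (ξ + s) + v n (ξ + s))
                = q (ξ + (s : ℂ)) * (Complex.exp (-(2 * Complex.I * z * ξ)) *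
                    Complex.exp (2 * Complex.I * z * (ξ + (s : ℂ)))) *
                    (u n (ξ + s) + v n (ξ + s)) := by rw [hexpeq]
              _ = Complex.exp (-(2 * Complex.I * z * ξ)) *
                  (q (ξ + (s : ℂ)) * Complex.exp (2 * Complex.I * z * (ξ + (s : ℂ))) *
                    (u n (ξ + s) + v n (ξ + s))) := by ring
          rw [heq, integral_const_mul]
        -- uniform bounds
        refine ⟨⟨hUdiff, hVdiff⟩, ‖Complex.I / (2 * z)‖ * (2 * k * M * I₀), by positivity, ?_⟩
        intro ξ hξ
        have hbound_int : ∫ s in Ioi (0:ℝ), (2 * k * M) * (1 + |ξ.re + s|) ^ (-γ)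
            ≤ 2 * k * M * I₀ := by
          rw [integral_const_mul]
          have h1 := JA.shift_integral_le hγ ξ.re
          calc (2 * k * M) * ∫ s in Ioi (0:ℝ), (1 + |ξ.re + s|) ^ (-γ)
              ≤ (2 * k * M) * I₀ := mul_le_mul_of_nonneg_left h1 (by positivity)
            _ = 2 * k * M * I₀ := by ring
        have hInt2 : IntegrableOn (fun s : ℝ => (2 * k * M) * (1 + |ξ.re + s|) ^ (-γ)) (Ioi 0) :=
          (JA.shifted_integrable hγ ξ.re).integrableOn.const_mul _
        constructor
        · rw [hu n ξ hξ, norm_mul]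
          have h1 : ‖∫ s in Ioi (0:ℝ), q (ξ + s) * (u n (ξ + s) + v n (ξ + s))‖
              ≤ 2 * k * M * I₀ := by
            calc ‖∫ s in Ioi (0:ℝ), q (ξ + s) * (u n (ξ + s) + v n (ξ + s))‖
                ≤ ∫ s in Ioi (0:ℝ), ‖q (ξ + s) * (u n (ξ + s) + v n (ξ + s))‖ :=
                  norm_integral_le_integral_norm _
              _ ≤ ∫ s in Ioi (0:ℝ), (2 * k * M) * (1 + |ξ.re + s|) ^ (-γ) := by
                  apply integral_mono_of_nonneg
                    (Filter.Eventually.of_forall fun s => norm_nonneg _) hInt2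
                  filter_upwards [ae_restrict_mem measurableSet_Ioi] with s hs
                  have hsS : ξ + (s : ℂ) ∈ S := hadd ξ hξ s hs.le
                  calc ‖q (ξ + (s:ℂ)) * (u n (ξ + s) + v n (ξ + s))‖
                      ≤ 2 * k * M * (1 + ‖ξ + (s:ℂ)‖) ^ (-γ) := hf₁b _ hsS
                    _ ≤ (2 * k * M) * (1 + |ξ.re + s|) ^ (-γ) :=
                        mul_le_mul_of_nonneg_left (hdecay ξ hξ s hs) (by positivity)
              _ ≤ 2 * k * M * I₀ := hbound_int
          exact mul_le_mul_of_nonneg_left h1 (norm_nonneg _)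
        · rw [hv n ξ hξ, norm_mul, norm_neg]
          have h1 : ‖∫ s in Ioi (0:ℝ), q (ξ + s) * Complex.exp (2 * Complex.I * s * z) *
                (u n (ξ + s) + v n (ξ + s))‖ ≤ 2 * k * M * I₀ := by
            calc ‖∫ s in Ioi (0:ℝ), q (ξ + s) * Complex.exp (2 * Complex.I * s * z) *
                  (u n (ξ + s) + v n (ξ + s))‖
                ≤ ∫ s in Ioi (0:ℝ), ‖q (ξ + s) * Complex.exp (2 * Complex.I * s * z) *
                  (u n (ξ + s) + v n (ξ + s))‖ := norm_integral_le_integral_norm _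
              _ ≤ ∫ s in Ioi (0:ℝ), (2 * k * M) * (1 + |ξ.re + s|) ^ (-γ) := by
                  apply integral_mono_of_nonneg
                    (Filter.Eventually.of_forall fun s => norm_nonneg _) hInt2
                  filter_upwards [ae_restrict_mem measurableSet_Ioi] with s hs
                  have hsS : ξ + (s : ℂ) ∈ S := hadd ξ hξ s hs.le
                  have hexple : ‖Complex.exp (2 * Complex.I * (s:ℂ) * z)‖ ≤ 1 := by
                    rw [Complex.norm_exp]
                    apply Real.exp_le_one_iff.2
                    have e2 : (2 * Complex.I * (s:ℂ) * z).re = -(2 * s * z.im) := by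
                      simp [Complex.mul_re, Complex.mul_im]
                    rw [e2]
                    nlinarith [le_of_lt (mem_Ioi.1 hs)]
                  calc ‖q (ξ + (s:ℂ)) * Complex.exp (2 * Complex.I * (s:ℂ) * z) *
                        (u n (ξ + s) + v n (ξ + s))‖
                      = ‖q (ξ + (s:ℂ)) * (u n (ξ + s) + v n (ξ + s))‖ *
                        ‖Complex.exp (2 * Complex.I * (s:ℂ) * z)‖ := by
                        rw [show q (ξ + (s:ℂ)) * Complex.exp (2 * Complex.I * (s:ℂ) * z) *
                            (u n (ξ + (s:ℂ)) + v n (ξ + (s:ℂ)))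
                          = q (ξ + (s:ℂ)) * (u n (ξ + (s:ℂ)) + v n (ξ + (s:ℂ))) *
                            Complex.exp (2 * Complex.I * (s:ℂ) * z) from by ring, norm_mul]
                    _ ≤ (2 * k * M * (1 + ‖ξ + (s:ℂ)‖) ^ (-γ)) * 1 := by
                        apply mul_le_mul (hf₁b _ hsS) hexple (norm_nonneg _) (by positivity)
                    _ = 2 * k * M * (1 + ‖ξ + (s:ℂ)‖) ^ (-γ) := by ring
                    _ ≤ (2 * k * M) * (1 + |ξ.re + s|) ^ (-γ) :=
                        mul_le_mul_of_nonneg_left (hdecay ξ hξ s hs) (by positivity)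
              _ ≤ 2 * k * M * I₀ := hbound_int
          exact mul_le_mul_of_nonneg_left h1 (norm_nonneg _)
  exact fun n => (key n).1
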